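/- If a(0) > 0 and w(0) > 0 and (a, w) solves da/dt = −C(aw² − w), dw/dt = −C(a²w − a) with C > 0 and a(0)·w(0) ≤ 1, then a(t) > 0 and w(t) > 0 and a(t)·w(t) ≤ 1 for all t ≥ 0, and a(t)·w(t) is non-decreasing. -/

import Mathlib

/-- Solution formula for a linear ODE `x' = g·x` with continuous `g`. -/
lemma ode_sol (x g : ℝ → ℝ) (hx : Differentiable ℝ x) (hg : Continuous g)
    (hd : ∀ t, deriv x t = g t * x t) (t : ℝ) :
    x t = x 0 * Real.exp (∫ s in (0:ℝ)..t, g s) := by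
  set G : ℝ → ℝ := fun t => ∫ s in (0:ℝ)..t, g s with hGdef
  have hGd : ∀ t, HasDerivAt G (g t) t := fun t =>
    intervalIntegral.integral_hasDerivAt_right (hg.intervalIntegrable 0 t)
      (hg.stronglyMeasurableAtFilter _ _) hg.continuousAt
  have hy : ∀ t, HasDerivAt (fun t => x t * Real.exp (-G t)) 0 t := by
    intro t
    have h1 : HasDerivAt (fun t => Real.exp (-G t)) (Real.exp (-G t) * (-(g t))) t :=
      (((hGd t).neg).exp)
    have h2 : HasDerivAt (fun t => x t * Real.exp (-G t)) _ t := ((hx t).hasDerivAt.mul h1)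
    convert h2 using 1
    rw [hd t]; ring
  have hconst : ∀ t, x t * Real.exp (-G t) = x 0 * Real.exp (-G 0) :=
    fun t => is_const_of_deriv_eq_zero (fun s => (hy s).differentiableAt)
      (fun s => (hy s).deriv) t 0
  have hG0 : G 0 = 0 := intervalIntegral.integral_same
  have := hconst t
  rw [hG0, neg_zero, Real.exp_zero, mul_one] at this
  have hE : Real.exp (-G t) * Real.exp (G t) = 1 := by
    rw [← Real.exp_add]; simp
  calc x t = x t * (Real.exp (-G t) * Real.exp (G t)) := by rw [hE, mul_one]
    _ = (x t * Real.exp (-G t)) * Real.exp (G t) := by ring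
    _ = x 0 * Real.exp (G t) := by rw [this]

theorem stmt_16 (a w : ℝ → ℝ) (C : ℝ) (hC : 0 < C)
    (ha : Differentiable ℝ a) (hw : Differentiable ℝ w)
    (hda : ∀ t, deriv a t = -(C * (a t * w t ^ 2 - w t)))
    (hdw : ∀ t, deriv w t = -(C * (a t ^ 2 * w t - a t)))
    (ha0 : 0 < a 0) (hw0 : 0 < w 0) (hprod0 : a 0 * w 0 ≤ 1) :
    (∀ t : ℝ, 0 ≤ t → 0 < a t ∧ 0 < w t ∧ a t * w t ≤ 1) ∧
    (∀ s t : ℝ, 0 ≤ s → s ≤ t → a s * w s ≤ a t * w t) := by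
  -- u = 1 - a w satisfies u' = (-k) u with k = C (a² + w²)
  set u : ℝ → ℝ := fun t => 1 - a t * w t with hudef
  set k : ℝ → ℝ := fun t => C * (a t ^ 2 + w t ^ 2) with hkdef
  have hk : Continuous k := by
    apply Continuous.mul continuous_const
    exact ((ha.continuous.pow 2).add (hw.continuous.pow 2))
  have hu : Differentiable ℝ u := (differentiable_const 1).sub (ha.mul hw)
  have hdu : ∀ t, deriv u t = (-k t) * u t := by
    intro t
    have : deriv u t = 0 - (deriv a t * w t + a t * deriv w t) := by
      rw [hudef]
      rw [deriv_fun_sub (g := fun y => a y * w y) (differentiableAt_const 1) ((ha t).mul (hw t)),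
        deriv_fun_mul (ha t) (hw t), deriv_const]
    rw [this, hda, hdw]; simp only [hkdef, hudef]; ring
  have husol : ∀ t, u t = u 0 * Real.exp (∫ s in (0:ℝ)..t, -k s) :=
    ode_sol u (fun t => -k t) hu hk.neg hdu
  have hu0 : 0 ≤ u 0 := by simp [hudef]; linarith
  have hunn : ∀ t, 0 ≤ u t := fun t => by
    rw [husol t]; positivity
  -- g = C u ≥ 0
  set g : ℝ → ℝ := fun t => C * u t with hgdef
  have hgc : Continuous g := continuous_const.mul hu.continuous
  have hgnn : ∀ t, 0 ≤ g t := fun t => mul_nonneg hC.le (hunn t)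
  -- s = a + w, d = a - w
  set S : ℝ → ℝ := fun t => a t + w t with hSdef
  set D : ℝ → ℝ := fun t => a t - w t with hDdef
  have hdS : ∀ t, deriv S t = g t * S t := by
    intro t
    rw [hSdef]
    rw [deriv_fun_add (ha t) (hw t), hda, hdw]
    simp only [hgdef, hudef, hSdef]; ring
  have hdD : ∀ t, deriv D t = (-g t) * D t := by
    intro t
    rw [hDdef]
    rw [deriv_fun_sub (ha t) (hw t), hda, hdw]
    simp only [hgdef, hudef, hDdef]; ring
  have hSsol : ∀ t, S t = S 0 * Real.exp (∫ s in (0:ℝ)..t, g s) :=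
    ode_sol S g (ha.add hw) hgc hdS
  have hDsol : ∀ t, D t = D 0 * Real.exp (-∫ s in (0:ℝ)..t, g s) := by
    intro t
    have := ode_sol D (fun t => -g t) (ha.sub hw) hgc.neg hdD t
    rwa [intervalIntegral.integral_neg] at this
  constructor
  · intro t ht
    set K : ℝ := ∫ s in (0:ℝ)..t, g s with hKdef
    have hK0 : 0 ≤ K := intervalIntegral.integral_nonneg ht (fun s _ => hgnn s)
    set E : ℝ := Real.exp K with hEdef
    set F : ℝ := Real.exp (-K) with hFdef
    have hE1 : 1 ≤ E := Real.one_le_exp hK0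
    have hF0 : 0 < F := Real.exp_pos _
    have hF1 : F ≤ 1 := Real.exp_le_one_iff.mpr (by linarith)
    have hat : a t = ((a 0 + w 0) * E + (a 0 - w 0) * F) / 2 := by
      have h1 := hSsol t; have h2 := hDsol t
      simp only [hSdef, hDdef] at h1 h2
      rw [← hKdef] at h1 h2
      rw [← hEdef] at h1; rw [← hFdef] at h2
      linarith
    have hwt : w t = ((a 0 + w 0) * E - (a 0 - w 0) * F) / 2 := by
      have h1 := hSsol t; have h2 := hDsol t
      simp only [hSdef, hDdef] at h1 h2
      rw [← hKdef] at h1 h2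
      rw [← hEdef] at h1; rw [← hFdef] at h2
      linarith
    refine ⟨?_, ?_, ?_⟩
    · rw [hat]
      nlinarith [mul_pos ha0 hF0, mul_nonneg (by linarith : (0:ℝ) ≤ a 0 + w 0)
        (by linarith : 0 ≤ E - F)]
    · rw [hwt]
      nlinarith [mul_pos hw0 hF0, mul_nonneg (by linarith : (0:ℝ) ≤ a 0 + w 0)
        (by linarith : 0 ≤ E - F)]
    · have := hunn t; simp only [hudef] at this; linarith
  · have hp : Differentiable ℝ (fun t => a t * w t) := ha.mul hw
    have hdp : ∀ t, 0 ≤ deriv (fun t => a t * w t) t := by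
      intro t
      rw [deriv_fun_mul (ha t) (hw t), hda, hdw]
      have h1 := hunn t; simp only [hudef] at h1
      nlinarith [mul_nonneg (mul_nonneg hC.le h1) (by positivity : (0:ℝ) ≤ a t ^ 2 + w t ^ 2)]
    have hmono := monotone_of_deriv_nonneg hp hdp
    exact fun s t _ hst => hmono hst
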